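/- Let δ > 0 and T > 0. For λ > δ² set b_λ := (λ − δ²)^{1/2}, u_λ(T) := (1/b_λ)∫₀ᵀ e^{−δ(T−s)} sin(b_λ(T−s)) cos(b_λ(T−s) − π/4) ds, and u_λ'(T) := −δ u_λ(T) + ∫₀ᵀ e^{−δ(T−s)} cos(b_λ(T−s)) cos(b_λ(T−s) − π/4) ds. Then lim_{λ→+∞} λ^{1/2} u_λ(T) = (√2/4)·(1/δ)·(1 − e^{−δT}) and lim_{λ→+∞} u_λ'(T) = (√2/4)·(1/δ)·(1 − e^{−δT}). -/

import Mathlib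

open Filter Real

section Aux

lemma osc_sin (δ T φ : ℝ) (hδ : 0 < δ) (hT : 0 ≤ T) :
    Tendsto (fun c : ℝ => ∫ u in (0:ℝ)..T, Real.exp (-δ * u) * Real.sin (c * u + φ)) atTop (nhds 0) := by
  refine squeeze_zero_norm' (a := fun c => 4 / c) ?_ ?_
  · filter_upwards [eventually_ge_atTop (max δ 1)] with c hc
    have hc1 : (1:ℝ) ≤ c := le_trans (le_max_right _ _) hc
    have hcδ : δ ≤ c := le_trans (le_max_left _ _) hc
    have hc0 : 0 < c := lt_of_lt_of_le one_pos hc1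
    have hden : (0:ℝ) < δ^2 + c^2 := by positivity
    set F : ℝ → ℝ := fun u =>
      Real.exp (-δ * u) * (-δ * Real.sin (c * u + φ) - c * Real.cos (c * u + φ)) / (δ^2 + c^2)
    have hF : ∀ u, HasDerivAt F (Real.exp (-δ * u) * Real.sin (c * u + φ)) u := by
      intro u
      have h1 : HasDerivAt (fun u : ℝ => Real.exp (-δ * u)) (-δ * Real.exp (-δ * u)) u := by
        simpa [mul_comm] using ((hasDerivAt_id u).const_mul (-δ)).exp
      have hs : HasDerivAt (fun u : ℝ => Real.sin (c * u + φ)) (c * Real.cos (c * u + φ)) u := by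
        simpa [mul_comm] using (((hasDerivAt_id u).const_mul c).add_const φ).sin
      have hcs : HasDerivAt (fun u : ℝ => Real.cos (c * u + φ)) (-(c * Real.sin (c * u + φ))) u := by
        simpa [mul_comm, mul_assoc] using (((hasDerivAt_id u).const_mul c).add_const φ).cos
      have h2 : HasDerivAt (fun u : ℝ => -δ * Real.sin (c * u + φ) - c * Real.cos (c * u + φ))
          (-δ * (c * Real.cos (c * u + φ)) - c * -(c * Real.sin (c * u + φ))) u :=
        (hs.const_mul (-δ)).sub (hcs.const_mul c)
      have := (h1.mul h2).div_const (δ^2 + c^2)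
      refine this.congr_deriv ?_
      rw [div_eq_iff hden.ne']
      ring
    have key : (∫ u in (0:ℝ)..T, Real.exp (-δ * u) * Real.sin (c * u + φ)) = F T - F 0 :=
      intervalIntegral.integral_eq_sub_of_hasDerivAt (fun u _ => hF u)
        (Continuous.intervalIntegrable (by continuity) 0 T)
    have hbound : ∀ u : ℝ, 0 ≤ u → |F u| ≤ 2 / c := by
      intro u hu
      have he0 : 0 < Real.exp (-δ * u) := Real.exp_pos _
      have he : Real.exp (-δ * u) ≤ 1 := Real.exp_le_one_iff.mpr (by nlinarith)
      have hnum : |(-δ * Real.sin (c * u + φ) - c * Real.cos (c * u + φ))| ≤ δ + c := by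
        have := abs_sub (-δ * Real.sin (c * u + φ)) (c * Real.cos (c * u + φ))
        have h1 : |(-δ * Real.sin (c * u + φ))| ≤ δ := by
          rw [abs_mul, abs_neg, abs_of_pos hδ]
          nlinarith [abs_sin_le_one (c * u + φ), abs_nonneg (Real.sin (c*u+φ))]
        have h2 : |c * Real.cos (c * u + φ)| ≤ c := by
          rw [abs_mul, abs_of_pos hc0]
          nlinarith [abs_cos_le_one (c * u + φ), abs_nonneg (Real.cos (c*u+φ))]
        calc |(-δ * Real.sin (c * u + φ) - c * Real.cos (c * u + φ))|
            ≤ |(-δ * Real.sin (c * u + φ))| + |c * Real.cos (c * u + φ)| := abs_sub _ _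
          _ ≤ δ + c := add_le_add h1 h2
      have : |F u| ≤ (δ + c) / (δ^2 + c^2) := by
        rw [abs_div, abs_of_pos hden, abs_mul, abs_of_pos he0]
        have hprod : Real.exp (-δ * u) * |(-δ * Real.sin (c * u + φ) - c * Real.cos (c * u + φ))| ≤ δ + c := by
          nlinarith [abs_nonneg (-δ * Real.sin (c * u + φ) - c * Real.cos (c * u + φ))]
        gcongr
      refine this.trans ?_
      rw [div_le_div_iff₀ hden hc0]
      nlinarith
    rw [key]
    calc ‖F T - F 0‖ ≤ |F T| + |F 0| := norm_sub_le _ _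
      _ ≤ 2 / c + 2 / c := add_le_add (hbound T hT) (hbound 0 le_rfl)
      _ = 4 / c := by ring
  · simpa using tendsto_const_nhds.div_atTop (tendsto_id (α := ℝ))

lemma osc_cos (δ T φ : ℝ) (hδ : 0 < δ) (hT : 0 ≤ T) :
    Tendsto (fun c : ℝ => ∫ u in (0:ℝ)..T, Real.exp (-δ * u) * Real.cos (c * u + φ)) atTop (nhds 0) := by
  refine squeeze_zero_norm' (a := fun c => 4 / c) ?_ ?_
  · filter_upwards [eventually_ge_atTop (max δ 1)] with c hc
    have hc1 : (1:ℝ) ≤ c := le_trans (le_max_right _ _) hc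
    have hcδ : δ ≤ c := le_trans (le_max_left _ _) hc
    have hc0 : 0 < c := lt_of_lt_of_le one_pos hc1
    have hden : (0:ℝ) < δ^2 + c^2 := by positivity
    set F : ℝ → ℝ := fun u =>
      Real.exp (-δ * u) * (-δ * Real.cos (c * u + φ) + c * Real.sin (c * u + φ)) / (δ^2 + c^2)
    have hF : ∀ u, HasDerivAt F (Real.exp (-δ * u) * Real.cos (c * u + φ)) u := by
      intro u
      have h1 : HasDerivAt (fun u : ℝ => Real.exp (-δ * u)) (-δ * Real.exp (-δ * u)) u := by
        simpa [mul_comm] using ((hasDerivAt_id u).const_mul (-δ)).exp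
      have hs : HasDerivAt (fun u : ℝ => Real.sin (c * u + φ)) (c * Real.cos (c * u + φ)) u := by
        simpa [mul_comm] using (((hasDerivAt_id u).const_mul c).add_const φ).sin
      have hcs : HasDerivAt (fun u : ℝ => Real.cos (c * u + φ)) (-(c * Real.sin (c * u + φ))) u := by
        simpa [mul_comm, mul_assoc] using (((hasDerivAt_id u).const_mul c).add_const φ).cos
      have h2 : HasDerivAt (fun u : ℝ => -δ * Real.cos (c * u + φ) + c * Real.sin (c * u + φ))
          (-δ * -(c * Real.sin (c * u + φ)) + c * (c * Real.cos (c * u + φ))) u :=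
        (hcs.const_mul (-δ)).add (hs.const_mul c)
      have := (h1.mul h2).div_const (δ^2 + c^2)
      refine this.congr_deriv ?_
      rw [div_eq_iff hden.ne']
      ring
    have key : (∫ u in (0:ℝ)..T, Real.exp (-δ * u) * Real.cos (c * u + φ)) = F T - F 0 :=
      intervalIntegral.integral_eq_sub_of_hasDerivAt (fun u _ => hF u)
        (Continuous.intervalIntegrable (by continuity) 0 T)
    have hbound : ∀ u : ℝ, 0 ≤ u → |F u| ≤ 2 / c := by
      intro u hu
      have he0 : 0 < Real.exp (-δ * u) := Real.exp_pos _
      have he : Real.exp (-δ * u) ≤ 1 := Real.exp_le_one_iff.mpr (by nlinarith)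
      have hnum : |(-δ * Real.cos (c * u + φ) + c * Real.sin (c * u + φ))| ≤ δ + c := by
        have := abs_sub (-δ * Real.sin (c * u + φ)) (c * Real.cos (c * u + φ))
        have h1 : |(-δ * Real.cos (c * u + φ))| ≤ δ := by
          rw [abs_mul, abs_neg, abs_of_pos hδ]
          nlinarith [abs_cos_le_one (c * u + φ), abs_nonneg (Real.cos (c*u+φ))]
        have h2 : |c * Real.sin (c * u + φ)| ≤ c := by
          rw [abs_mul, abs_of_pos hc0]
          nlinarith [abs_sin_le_one (c * u + φ), abs_nonneg (Real.sin (c*u+φ))]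
        calc |(-δ * Real.cos (c * u + φ) + c * Real.sin (c * u + φ))|
            ≤ |(-δ * Real.cos (c * u + φ))| + |c * Real.sin (c * u + φ)| := abs_add_le _ _
          _ ≤ δ + c := add_le_add h1 h2
      have : |F u| ≤ (δ + c) / (δ^2 + c^2) := by
        rw [abs_div, abs_of_pos hden, abs_mul, abs_of_pos he0]
        have hprod : Real.exp (-δ * u) * |(-δ * Real.cos (c * u + φ) + c * Real.sin (c * u + φ))| ≤ δ + c := by
          nlinarith [abs_nonneg (-δ * Real.cos (c * u + φ) + c * Real.sin (c * u + φ))]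
        gcongr
      refine this.trans ?_
      rw [div_le_div_iff₀ hden hc0]
      nlinarith
    rw [key]
    calc ‖F T - F 0‖ ≤ |F T| + |F 0| := norm_sub_le _ _
      _ ≤ 2 / c + 2 / c := add_le_add (hbound T hT) (hbound 0 le_rfl)
      _ = 4 / c := by ring
  · simpa using tendsto_const_nhds.div_atTop (tendsto_id (α := ℝ))

lemma sincos_id (x : ℝ) :
    Real.sin x * Real.cos (x - Real.pi/4) =
      Real.sqrt 2 / 4 + 1/2 * Real.sin (2*x + -(Real.pi/4)) := by
  have h1 : 2*x + -(Real.pi/4) = x + (x - Real.pi/4) := by ring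
  have h2 := Real.sin_add x (x - Real.pi/4)
  have h3 := Real.sin_sub x (x - Real.pi/4)
  have h4 : x - (x - Real.pi/4) = Real.pi/4 := by ring
  rw [h4, Real.sin_pi_div_four] at h3
  rw [h1, h2]; linarith

lemma coscos_id (x : ℝ) :
    Real.cos x * Real.cos (x - Real.pi/4) =
      Real.sqrt 2 / 4 + 1/2 * Real.cos (2*x + -(Real.pi/4)) := by
  have h1 : 2*x + -(Real.pi/4) = x + (x - Real.pi/4) := by ring
  have h2 := Real.cos_add x (x - Real.pi/4)
  have h3 := Real.cos_sub x (x - Real.pi/4)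
  have h4 : x - (x - Real.pi/4) = Real.pi/4 := by ring
  rw [h4, Real.cos_pi_div_four] at h3
  rw [h1, h2]; linarith

lemma int_exp (δ T : ℝ) (hδ : δ ≠ 0) :
    ∫ u in (0:ℝ)..T, Real.exp (-δ*u) = (1 - Real.exp (-δ*T))/δ := by
  have hF : ∀ u : ℝ, HasDerivAt (fun u : ℝ => -Real.exp (-δ*u)/δ) (Real.exp (-δ*u)) u := by
    intro u
    have h1 : HasDerivAt (fun u : ℝ => Real.exp (-δ * u)) (-δ * Real.exp (-δ * u)) u := by
      simpa [mul_comm] using ((hasDerivAt_id u).const_mul (-δ)).exp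
    have := (h1.neg).div_const δ
    refine this.congr_deriv ?_
    rw [neg_mul, neg_neg, mul_div_cancel_left₀ _ hδ]
  rw [intervalIntegral.integral_eq_sub_of_hasDerivAt (fun u _ => hF u)
    (Continuous.intervalIntegrable (by continuity) 0 T)]
  field_simp
  ring_nf
  rw [Real.exp_zero]
  ring

lemma split_sin (δ T b : ℝ) :
    (∫ s in (0:ℝ)..T, Real.exp (-δ * (T - s)) * Real.sin (b * (T - s)) *
        Real.cos (b * (T - s) - Real.pi/4))
    = Real.sqrt 2 / 4 * (∫ u in (0:ℝ)..T, Real.exp (-δ*u))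
      + 1/2 * ∫ u in (0:ℝ)..T, Real.exp (-δ*u) * Real.sin (2*b*u + -(Real.pi/4)) := by
  have hsub := intervalIntegral.integral_comp_sub_left (a := (0:ℝ)) (b := T)
    (fun u => Real.exp (-δ*u) * Real.sin (b*u) * Real.cos (b*u - Real.pi/4)) T
  simp only [sub_self, sub_zero] at hsub
  rw [hsub]
  have hpt : ∀ u : ℝ, Real.exp (-δ*u) * Real.sin (b*u) * Real.cos (b*u - Real.pi/4)
      = Real.sqrt 2 / 4 * Real.exp (-δ*u)
        + 1/2 * (Real.exp (-δ*u) * Real.sin (2*b*u + -(Real.pi/4))) := by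
    intro u
    have := sincos_id (b*u)
    have h2 : 2*(b*u) + -(Real.pi/4) = 2*b*u + -(Real.pi/4) := by ring
    rw [h2] at this
    calc Real.exp (-δ*u) * Real.sin (b*u) * Real.cos (b*u - Real.pi/4)
        = Real.exp (-δ*u) * (Real.sin (b*u) * Real.cos (b*u - Real.pi/4)) := by ring
      _ = _ := by rw [this]; ring
  rw [intervalIntegral.integral_congr (g := fun u => Real.sqrt 2 / 4 * Real.exp (-δ*u)
        + 1/2 * (Real.exp (-δ*u) * Real.sin (2*b*u + -(Real.pi/4)))) (fun u _ => hpt u)]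
  rw [intervalIntegral.integral_add
      ((Continuous.intervalIntegrable (by fun_prop) 0 T))
      ((Continuous.intervalIntegrable (by fun_prop) 0 T)),
    intervalIntegral.integral_const_mul, intervalIntegral.integral_const_mul]

lemma split_cos (δ T b : ℝ) :
    (∫ s in (0:ℝ)..T, Real.exp (-δ * (T - s)) * Real.cos (b * (T - s)) *
        Real.cos (b * (T - s) - Real.pi/4))
    = Real.sqrt 2 / 4 * (∫ u in (0:ℝ)..T, Real.exp (-δ*u))
      + 1/2 * ∫ u in (0:ℝ)..T, Real.exp (-δ*u) * Real.cos (2*b*u + -(Real.pi/4)) := by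
  have hsub := intervalIntegral.integral_comp_sub_left (a := (0:ℝ)) (b := T)
    (fun u => Real.exp (-δ*u) * Real.cos (b*u) * Real.cos (b*u - Real.pi/4)) T
  simp only [sub_self, sub_zero] at hsub
  rw [hsub]
  have hpt : ∀ u : ℝ, Real.exp (-δ*u) * Real.cos (b*u) * Real.cos (b*u - Real.pi/4)
      = Real.sqrt 2 / 4 * Real.exp (-δ*u)
        + 1/2 * (Real.exp (-δ*u) * Real.cos (2*b*u + -(Real.pi/4))) := by
    intro u
    have := coscos_id (b*u)
    have h2 : 2*(b*u) + -(Real.pi/4) = 2*b*u + -(Real.pi/4) := by ring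
    rw [h2] at this
    calc Real.exp (-δ*u) * Real.cos (b*u) * Real.cos (b*u - Real.pi/4)
        = Real.exp (-δ*u) * (Real.cos (b*u) * Real.cos (b*u - Real.pi/4)) := by ring
      _ = _ := by rw [this]; ring
  rw [intervalIntegral.integral_congr (g := fun u => Real.sqrt 2 / 4 * Real.exp (-δ*u)
        + 1/2 * (Real.exp (-δ*u) * Real.cos (2*b*u + -(Real.pi/4)))) (fun u _ => hpt u)]
  rw [intervalIntegral.integral_add
      ((Continuous.intervalIntegrable (by fun_prop) 0 T))
      ((Continuous.intervalIntegrable (by fun_prop) 0 T)),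
    intervalIntegral.integral_const_mul, intervalIntegral.integral_const_mul]

end Aux

/-- `b_λ := (λ − δ²)^{1/2}` for `σ = 0`. -/
noncomputable def bl (δ lam : ℝ) : ℝ := (lam - δ ^ 2) ^ ((1 : ℝ) / 2)

/-- `u_λ(T)` for the forcing term `f_λ(t) = cos(b_λ(T−t) − π/4)`. -/
noncomputable def uT (δ T lam : ℝ) : ℝ :=
  (1 / bl δ lam) * ∫ s in (0 : ℝ)..T,
    Real.exp (-δ * (T - s)) * Real.sin (bl δ lam * (T - s)) *
      Real.cos (bl δ lam * (T - s) - Real.pi / 4)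

/-- `u_λ'(T)` for the forcing term `f_λ(t) = cos(b_λ(T−t) − π/4)`. -/
noncomputable def uT' (δ T lam : ℝ) : ℝ :=
  -δ * uT δ T lam + ∫ s in (0 : ℝ)..T,
    Real.exp (-δ * (T - s)) * Real.cos (bl δ lam * (T - s)) *
      Real.cos (bl δ lam * (T - s) - Real.pi / 4)

/-- `λ^{1/2} u_λ(T) → (√2/4)(1/δ)(1 − e^{−δT})` and
`u_λ'(T) → (√2/4)(1/δ)(1 − e^{−δT})` as `λ → +∞`. -/
theorem sigma_zero_counterexample_limits (δ T : ℝ) (hδ : 0 < δ) (hT : 0 < T) :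
    Tendsto (fun lam : ℝ => lam ^ ((1 : ℝ) / 2) * uT δ T lam) atTop
      (nhds (Real.sqrt 2 / 4 * (1 / δ) * (1 - Real.exp (-δ * T)))) ∧
    Tendsto (fun lam : ℝ => uT' δ T lam) atTop
      (nhds (Real.sqrt 2 / 4 * (1 / δ) * (1 - Real.exp (-δ * T)))) := by
  set L : ℝ := Real.sqrt 2 / 4 * (1 / δ) * (1 - Real.exp (-δ * T)) with hLdef
  have hδ' : δ ≠ 0 := ne_of_gt hδ
  have hE : (∫ u in (0:ℝ)..T, Real.exp (-δ*u)) = (1 - Real.exp (-δ*T))/δ := int_exp δ T hδ'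
  have h1 : Tendsto (fun lam : ℝ => lam - δ^2) atTop atTop := by
    simpa [sub_eq_add_neg] using tendsto_atTop_add_const_right atTop (-δ^2) (tendsto_id (α := ℝ))
  have hb : Tendsto (fun lam : ℝ => bl δ lam) atTop atTop :=
    (tendsto_rpow_atTop (by norm_num : (0:ℝ) < 1/2)).comp h1
  have h2b : Tendsto (fun lam : ℝ => 2 * bl δ lam) atTop atTop := by
    exact Tendsto.const_mul_atTop two_pos hb
  have hS : Tendsto (fun lam : ℝ => ∫ u in (0:ℝ)..T,
      Real.exp (-δ*u) * Real.sin (2 * bl δ lam * u + -(Real.pi/4))) atTop (nhds 0) := by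
    have := (osc_sin δ T (-(Real.pi/4)) hδ hT.le).comp h2b
    simpa [Function.comp_def] using this
  have hC : Tendsto (fun lam : ℝ => ∫ u in (0:ℝ)..T,
      Real.exp (-δ*u) * Real.cos (2 * bl δ lam * u + -(Real.pi/4))) atTop (nhds 0) := by
    have := (osc_cos δ T (-(Real.pi/4)) hδ hT.le).comp h2b
    simpa [Function.comp_def] using this
  have hLalt : L = Real.sqrt 2 / 4 * ((1 - Real.exp (-δ*T))/δ) + 1/2 * 0 := by
    rw [hLdef]; ring
  have hJ : Tendsto (fun lam : ℝ => ∫ s in (0:ℝ)..T,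
      Real.exp (-δ * (T - s)) * Real.sin (bl δ lam * (T - s)) *
        Real.cos (bl δ lam * (T - s) - Real.pi / 4)) atTop (nhds L) := by
    rw [hLalt]
    have := tendsto_const_nhds (x := Real.sqrt 2 / 4 * ((1 - Real.exp (-δ*T))/δ))
      (f := atTop (α := ℝ)) |>.add (hS.const_mul (1/2))
    exact this.congr fun lam => by rw [split_sin δ T (bl δ lam), hE]
  have hK : Tendsto (fun lam : ℝ => ∫ s in (0:ℝ)..T,
      Real.exp (-δ * (T - s)) * Real.cos (bl δ lam * (T - s)) *
        Real.cos (bl δ lam * (T - s) - Real.pi / 4)) atTop (nhds L) := by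
    rw [hLalt]
    have := tendsto_const_nhds (x := Real.sqrt 2 / 4 * ((1 - Real.exp (-δ*T))/δ))
      (f := atTop (α := ℝ)) |>.add (hC.const_mul (1/2))
    exact this.congr fun lam => by rw [split_cos δ T (bl δ lam), hE]
  have hfrac : Tendsto (fun lam : ℝ => lam ^ ((1:ℝ)/2) / bl δ lam) atTop (nhds 1) := by
    have h0 : Tendsto (fun lam : ℝ => δ^2 / (lam - δ^2)) atTop (nhds 0) :=
      tendsto_const_nhds.div_atTop h1
    have h1' : Tendsto (fun lam : ℝ => 1 + δ^2/(lam - δ^2)) atTop (nhds 1) := by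
      simpa using tendsto_const_nhds.add h0
    have h2' : Tendsto (fun lam : ℝ => lam / (lam - δ^2)) atTop (nhds 1) := by
      apply h1'.congr'
      filter_upwards [eventually_gt_atTop (δ^2)] with lam hlam
      have hne : lam - δ^2 ≠ 0 := ne_of_gt (sub_pos.mpr hlam)
      field_simp
      ring
    have h3' : Tendsto (fun lam : ℝ => (lam / (lam - δ^2)) ^ ((1:ℝ)/2)) atTop (nhds 1) := by
      have hcont := (Real.continuousAt_rpow_const 1 (1/2) (Or.inl one_ne_zero)).tendsto
      have := hcont.comp h2'
      simpa [Function.comp_def, Real.one_rpow] using this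
    apply h3'.congr'
    filter_upwards [eventually_gt_atTop (max (δ^2) 0)] with lam hlam
    have hl0 : (0:ℝ) < lam := lt_of_le_of_lt (le_max_right _ _) hlam
    have hld : (0:ℝ) < lam - δ^2 := sub_pos.mpr (lt_of_le_of_lt (le_max_left _ _) hlam)
    rw [Real.div_rpow hl0.le hld.le]
    rfl
  constructor
  · have := hfrac.mul hJ
    rw [one_mul] at this
    exact this.congr fun lam => by rw [uT]; ring
  · have hbinv : Tendsto (fun lam : ℝ => 1 / bl δ lam) atTop (nhds 0) := by
      simpa [one_div, Pi.inv_def] using hb.inv_tendsto_atTop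
    have huT0 : Tendsto (fun lam : ℝ => uT δ T lam) atTop (nhds 0) := by
      have := hbinv.mul hJ
      rw [zero_mul] at this
      exact this.congr fun lam => by rw [uT]
    have := (huT0.const_mul (-δ)).add hK
    rw [mul_zero, zero_add] at this
    exact this.congr fun lam => by rw [uT']
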